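/- Let K ≥ 1 be an integer, let ε > 0, and let Δ_1 ≥ Δ_2 ≥ … ≥ Δ_K be real numbers with Δ_K > 2ε. Then Δ_1 / (Δ_1 − 2ε)² + Σ_{j=2}^K Δ_j · ( 1/(Δ_j − 2ε)² − 1/(Δ_{j−1} − 2ε)² ) ≤ 2 (Δ_K − ε) / (Δ_K − 2ε)². -/
import Mathlib


/-- For gaps `Δ_1 ≥ … ≥ Δ_K > 2ε` (items indexed `1, …, K`),
`Δ_1/(Δ_1 - 2ε)² + ∑_{j=2}^K Δ_j (1/(Δ_j - 2ε)² - 1/(Δ_{j-1} - 2ε)²)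
  ≤ 2 (Δ_K - ε)/(Δ_K - 2ε)²`. -/
theorem stmt_9 (K : ℕ) (hK : 1 ≤ K) (ε : ℝ) (hε : 0 < ε) (Δ : ℕ → ℝ)
    (hmono : ∀ j k : ℕ, 1 ≤ j → j ≤ k → k ≤ K → Δ k ≤ Δ j)
    (hΔK : 2 * ε < Δ K) :
    Δ 1 / (Δ 1 - 2 * ε) ^ 2
      + ∑ j ∈ Finset.Icc 2 K, Δ j * (1 / (Δ j - 2 * ε) ^ 2 - 1 / (Δ (j - 1) - 2 * ε) ^ 2)
      ≤ 2 * (Δ K - ε) / (Δ K - 2 * ε) ^ 2 := by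
  revert hmono hΔK
  induction K, hK using Nat.le_induction with
  | base =>
    intro hmono hΔK
    rw [show Finset.Icc 2 1 = (∅ : Finset ℕ) by decide, Finset.sum_empty, add_zero]
    have h1 : (0:ℝ) < (Δ 1 - 2 * ε) ^ 2 := pow_pos (by linarith) 2
    rw [div_le_div_iff₀ h1 h1]
    nlinarith [sq_nonneg (Δ 1 - 2 * ε)]
  | succ K hK ih =>
    intro hmono hΔK
    have hle : Δ (K + 1) ≤ Δ K :=
      hmono K (K + 1) hK (Nat.le_succ K) le_rfl
    have hΔK' : 2 * ε < Δ K := lt_of_lt_of_le hΔK hle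
    have ih' := ih (fun j k hj hjk hk => hmono j k hj hjk (hk.trans (Nat.le_succ K))) hΔK'
    rw [Finset.sum_Icc_succ_top (by omega : 2 ≤ K + 1)]
    simp only [Nat.add_sub_cancel]
    have ha : (0:ℝ) < Δ K - 2 * ε := by linarith
    have hb : (0:ℝ) < Δ (K + 1) - 2 * ε := by linarith
    have key : 2 * (Δ K - ε) / (Δ K - 2 * ε) ^ 2
        + Δ (K + 1) * (1 / (Δ (K + 1) - 2 * ε) ^ 2 - 1 / (Δ K - 2 * ε) ^ 2)
        ≤ 2 * (Δ (K + 1) - ε) / (Δ (K + 1) - 2 * ε) ^ 2 := by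
      rw [← sub_nonneg]
      have expand : 2 * (Δ (K + 1) - ε) / (Δ (K + 1) - 2 * ε) ^ 2
          - (2 * (Δ K - ε) / (Δ K - 2 * ε) ^ 2
            + Δ (K + 1) * (1 / (Δ (K + 1) - 2 * ε) ^ 2 - 1 / (Δ K - 2 * ε) ^ 2))
          = (Δ (K + 1) - 2 * ε) * (Δ K - Δ (K + 1)) ^ 2
            / ((Δ K - 2 * ε) ^ 2 * (Δ (K + 1) - 2 * ε) ^ 2) := by
        field_simp
        ring
      rw [expand]
      exact div_nonneg (mul_nonneg hb.le (sq_nonneg _)) (by positivity)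
    linarith [ih']
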